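/- Let A = ⟨Q, N, f⟩ be a cellular automaton over a finitely generated group G, and let {X_n} be an amenable exhaustive sequence. Then the global map F_A is Lipschitz continuous with respect to the Besicovitch pseudodistance d_{B,{X_n}}, with Lipschitz constant 1 + |N|: d_{B,{X_n}}(F_A(c_1), F_A(c_2)) ≤ (1+|N|) · d_{B,{X_n}}(c_1, c_2) for all c_1, c_2 ∈ Q^G. -/

import Mathlib

open Filter Pointwise

noncomputable def hamDist {G Q : Type*} (U : Set G) (c₁ c₂ : G → Q) : ℕ :=
  {x ∈ U | c₁ x ≠ c₂ x}.ncard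

noncomputable def besDist {G Q : Type*} (X : ℕ → Finset G) (c₁ c₂ : G → Q) : ℝ :=
  limsup (fun n => (hamDist (X n : Set G) c₁ c₂ : ℝ) / (X n).card) atTop

def IsExhaustive {G : Type*} (X : ℕ → Finset G) : Prop :=
  (∀ n, X n ⊆ X (n + 1)) ∧ ∀ g : G, ∃ n, g ∈ X n

def IsFolner {G : Type*} [Group G] [DecidableEq G] (X : ℕ → Finset G) : Prop :=
  IsExhaustive X ∧ ∀ E : Finset G,
    Tendsto (fun n => (((X n * E⁻¹) \ X n).card : ℝ) / (X n).card) atTop (nhds 0)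

def caMap {G Q : Type*} [Group G] (N : Finset G) (f : (N → Q) → Q) :
    (G → Q) → G → Q :=
  fun c g => f (fun x => c (g * x.1))

open Classical in
lemma hamDist_coe_finset {G Q : Type*} (s : Finset G) (c₁ c₂ : G → Q) :
    hamDist (s : Set G) c₁ c₂ = (s.filter fun x => c₁ x ≠ c₂ x).card := by
  rw [hamDist, show {x ∈ (s : Set G) | c₁ x ≠ c₂ x}
      = ((s.filter fun x => c₁ x ≠ c₂ x : Finset G) : Set G) by ext x; simp,
    Set.ncard_coe_finset]

open Classical in
lemma ca_ham_key {G Q : Type*} [Group G] [DecidableEq G]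
    (N : Finset G) (f : (N → Q) → Q) (s : Finset G) (c₁ c₂ : G → Q) :
    (s.filter fun g => caMap N f c₁ g ≠ caMap N f c₂ g).card ≤
      N.card * ((s.filter fun h => c₁ h ≠ c₂ h).card + ((s * N) \ s).card) := by
  set D := (s.filter fun h => c₁ h ≠ c₂ h) ∪ ((s * N) \ s) with hD
  have hsub : (s.filter fun g => caMap N f c₁ g ≠ caMap N f c₂ g) ⊆ D * N⁻¹ := by
    intro g hg
    rw [Finset.mem_filter] at hg
    obtain ⟨hgs, hne⟩ := hg
    have hx : ∃ x : N, c₁ (g * x.1) ≠ c₂ (g * x.1) := by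
      by_contra h
      push_neg at h
      exact hne (by unfold caMap; congr 1; funext x; exact h x)
    obtain ⟨⟨x, hxN⟩, hxe⟩ := hx
    have hDmem : g * x ∈ D := by
      by_cases hmem : g * x ∈ s
      · exact Finset.mem_union_left _ (Finset.mem_filter.2 ⟨hmem, hxe⟩)
      · exact Finset.mem_union_right _
          (Finset.mem_sdiff.2 ⟨Finset.mul_mem_mul hgs hxN, hmem⟩)
    have hg' : g = (g * x) * x⁻¹ := by group
    rw [hg']
    exact Finset.mul_mem_mul hDmem (Finset.inv_mem_inv hxN)
  calc (s.filter fun g => caMap N f c₁ g ≠ caMap N f c₂ g).card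
      ≤ (D * N⁻¹).card := Finset.card_le_card hsub
    _ ≤ D.card * N⁻¹.card := Finset.card_mul_le
    _ ≤ ((s.filter fun h => c₁ h ≠ c₂ h).card + ((s * N) \ s).card) * N.card := by
        rw [Finset.card_inv]
        exact Nat.mul_le_mul_right _ (Finset.card_union_le _ _)
    _ = N.card * ((s.filter fun h => c₁ h ≠ c₂ h).card + ((s * N) \ s).card) :=
        mul_comm _ _

/-- The global map of a CA is Lipschitz with constant `1 + |N|` with respect to
the Besicovitch pseudodistance induced by an amenable exhaustive sequence. -/
theorem ca_lipschitz_besicovitch_folner {G Q : Type*} [Group G] [DecidableEq G]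
    [Fintype Q] (hQ : 2 ≤ Fintype.card Q)
    (N : Finset G) (hN : N.Nonempty) (f : (N → Q) → Q)
    (X : ℕ → Finset G) (hX : IsFolner X) (c₁ c₂ : G → Q) :
    besDist X (caMap N f c₁) (caMap N f c₂) ≤ (1 + N.card) * besDist X c₁ c₂ := by
  classical
  obtain ⟨-, hF⟩ := hX
  set K : ℝ := (N.card : ℝ) with hKdef
  have hK0 : 0 ≤ K := by positivity
  set a : ℕ → ℝ := fun n =>
    (hamDist (X n : Set G) (caMap N f c₁) (caMap N f c₂) : ℝ) / (X n).card with ha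
  set b : ℕ → ℝ := fun n => (hamDist (X n : Set G) c₁ c₂ : ℝ) / (X n).card with hb
  set e : ℕ → ℝ := fun n => (((X n * N) \ X n).card : ℝ) / (X n).card with he
  -- pointwise inequality
  have hab : ∀ n, a n ≤ K * b n + K * e n := by
    intro n
    rcases Nat.eq_zero_or_pos (X n).card with h | h
    · have hX0 : X n = ∅ := Finset.card_eq_zero.mp h
      simp [ha, hb, he, hX0, hamDist_coe_finset]
    · have hc : (0 : ℝ) < (X n).card := by exact_mod_cast h
      have key := ca_ham_key N f (X n) c₁ c₂
      have keyR : (hamDist (X n : Set G) (caMap N f c₁) (caMap N f c₂) : ℝ) ≤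
          K * ((hamDist (X n : Set G) c₁ c₂ : ℝ) + (((X n * N) \ X n).card : ℝ)) := by
        rw [hamDist_coe_finset, hamDist_coe_finset]
        calc (((X n).filter fun g => caMap N f c₁ g ≠ caMap N f c₂ g).card : ℝ)
            ≤ ((N.card * (((X n).filter fun h => c₁ h ≠ c₂ h).card
                + ((X n * N) \ X n).card) : ℕ) : ℝ) := by exact_mod_cast key
          _ = K * ((((X n).filter fun h => c₁ h ≠ c₂ h).card : ℝ)
                + (((X n * N) \ X n).card : ℝ)) := by push_cast [hKdef]; ring
      calc a n ≤ K * ((hamDist (X n : Set G) c₁ c₂ : ℝ) + (((X n * N) \ X n).card : ℝ))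
            / (X n).card := by
            rw [ha]
            exact div_le_div_of_nonneg_right keyR hc.le |>.trans_eq rfl
        _ = K * b n + K * e n := by rw [hb, he]; ring
  -- basic bounds
  have hb0 : ∀ n, 0 ≤ b n := fun n => by positivity
  have hb1 : ∀ n, b n ≤ 1 := by
    intro n
    apply div_le_one_of_le₀
    · rw [hamDist_coe_finset]
      exact_mod_cast Finset.card_le_card (Finset.filter_subset _ _)
    · positivity
  have ha0 : ∀ n, 0 ≤ a n := fun n => by positivity
  have he0 : ∀ n, 0 ≤ e n := fun n => by positivity
  -- Følner: e → 0
  have hetends : Tendsto e atTop (nhds 0) := by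
    have := hF N⁻¹
    simpa [he, inv_inv] using this
  have hKe : Tendsto (fun n => K * e n) atTop (nhds 0) := by
    simpa using hetends.const_mul K
  -- limsup manipulations
  have hbddKb : IsBoundedUnder (· ≤ ·) atTop (fun n => K * b n) :=
    isBoundedUnder_of ⟨K, fun n => by
      calc K * b n ≤ K * 1 := mul_le_mul_of_nonneg_left (hb1 n) hK0
        _ = K := mul_one K⟩
  have hbddKe : IsBoundedUnder (· ≤ ·) atTop (fun n => K * e n) :=
    hKe.isBoundedUnder_le
  have h1 : limsup a atTop ≤ limsup (fun n => K * b n + K * e n) atTop := by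
    exact limsup_le_limsup (Eventually.of_forall hab)
      (isCoboundedUnder_le_of_le atTop ha0)
      (isBoundedUnder_le_add hbddKb hbddKe)
  have h2 : limsup (fun n => K * b n + K * e n) atTop ≤
      limsup (fun n => K * b n) atTop + limsup (fun n => K * e n) atTop := by
    have := limsup_add_le (f := atTop) (u := fun n => K * b n) (v := fun n => K * e n)
      (isBoundedUnder_of ⟨0, fun n => by positivity⟩) hbddKb
      (isCoboundedUnder_le_of_le atTop fun n => by positivity) hbddKe
    exact this
  have h3 : limsup (fun n => K * e n) atTop = 0 := hKe.limsup_eq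
  have h4 : limsup (fun n => K * b n) atTop = K * limsup b atTop := by
    have hmono : Monotone (fun x : ℝ => K * x) :=
      fun x y hxy => mul_le_mul_of_nonneg_left hxy hK0
    have := hmono.map_limsup_of_continuousAt (F := atTop) b
      ((continuous_const.mul continuous_id).continuousAt)
      (isBoundedUnder_of ⟨1, hb1⟩) (isCoboundedUnder_le_of_le atTop hb0)
    simpa [Function.comp_def] using this.symm
  have hL0 : 0 ≤ limsup b atTop :=
    le_limsup_of_frequently_le (Frequently.of_forall hb0) (isBoundedUnder_of ⟨1, hb1⟩)
  have : limsup a atTop ≤ K * limsup b atTop := by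
    calc limsup a atTop ≤ limsup (fun n => K * b n) atTop + limsup (fun n => K * e n) atTop :=
          h1.trans h2
      _ = K * limsup b atTop := by rw [h3, h4, add_zero]
  have hfinal : limsup a atTop ≤ (1 + K) * limsup b atTop := by
    nlinarith [hL0]
  exact hfinal
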